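/- Let G be a 2-tough non-Hamiltonian graph on n ≥ 3 vertices possessing a Hamiltonian path from x to y, where x and y are non-adjacent vertices with d(x) + d(y) = n − 1. Then |N(x) ∩ N(y)| ≥ 2. -/

import Mathlib

open SimpleGraph

/-- A graph `G` is `t`-tough if for every set `S` of vertices such that `G - S` is
disconnected, `t * c(G - S) ≤ |S|`, where `c` counts connected components. -/
def Tough {V : Type*} [Fintype V] (t : ℝ) (G : SimpleGraph V) : Prop :=
  ∀ S : Finset V, ¬ (G.induce ((↑S : Set V)ᶜ)).Connected →
    t * (Nat.card (G.induce ((↑S : Set V)ᶜ)).ConnectedComponent) ≤ S.card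

open List Finset

namespace SimpleGraph.Walk
variable {V : Type*} {G : SimpleGraph V} {u v w : V}

def tke : {u v : V} → (p : G.Walk u v) → (n : ℕ) → G.Walk u (p.getVert n)
  | _, _, .nil, _ => .nil
  | _, _, .cons _ _, 0 => .nil
  | _, _, .cons h q, n+1 => .cons h (tke q n)

@[simp] lemma support_tke (p : G.Walk u v) (n : ℕ) :
    (tke p n).support = p.support.take (n+1) := by
  induction p generalizing n with
  | nil => simp [tke]
  | cons h q ih =>
    cases n with
    | zero => simp [tke]; rfl
    | succ n => simp [tke, ih]

lemma support_drop' (p : G.Walk u v) (n : ℕ) (hn : n ≤ p.length) :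
    (p.drop n).support = p.support.drop n := by
  induction p generalizing n with
  | nil => simp at hn; simp [hn, drop]
  | cons h q ih =>
    cases n with
    | zero => simp [drop]
    | succ n =>
      simp only [length_cons] at hn
      simp [drop, ih n (by omega)]

lemma getVert_drop' (p : G.Walk u v) (n i : ℕ) :
    (p.drop n).getVert i = p.getVert (n + i) := by
  induction p generalizing n with
  | nil => simp [drop, getVert]
  | cons h q ih =>
    cases n with
    | zero => simp [drop]
    | succ n => simp [drop, ih n, Nat.succ_add]

lemma take_drop_disjoint {L : List V} (hnd : L.Nodup) (k : ℕ) {z : V}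
    (h1 : z ∈ L.take k) (h2 : z ∈ L.drop k) : False := by
  have := List.take_append_drop k L
  rw [← this] at hnd
  exact (List.disjoint_of_nodup_append hnd) h1 h2

lemma mem_take_of_le {L : List V} {j k : ℕ} (hjk : j ≤ k) {z : V} (h : z ∈ L.take j) :
    z ∈ L.take k := by
  have : L.take j = (L.take k).take j := by rw [List.take_take, Nat.min_eq_left hjk]
  rw [this] at h
  exact List.take_subset _ _ h

lemma getVert_mem_take (p : G.Walk u v) (j : ℕ) :
    p.getVert j ∈ p.support.take (j+1) := by
  rw [← support_tke]
  exact end_mem_support _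

lemma getVert_mem_drop (p : G.Walk u v) {j : ℕ} (hj : j ≤ p.length) :
    p.getVert j ∈ p.support.drop j := by
  rw [← support_drop' _ _ hj]
  exact start_mem_support _

lemma getVert_inj {p : G.Walk u v} (hnd : p.support.Nodup) {j k : ℕ}
    (hj : j ≤ p.length) (hk : k ≤ p.length) (h : p.getVert j = p.getVert k) : j = k := by
  by_contra hne
  rcases Nat.lt_or_ge j k with hlt | hge
  · exact take_drop_disjoint hnd k (mem_take_of_le hlt (h ▸ getVert_mem_take p j))
      (getVert_mem_drop p hk)
  · have hlt : k < j := by omega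
    exact take_drop_disjoint hnd j (mem_take_of_le hlt (h ▸ getVert_mem_take p k))
      (getVert_mem_drop p hj)

section Ham
variable {V : Type*} [DecidableEq V] [Fintype V] {G : SimpleGraph V} {x y : V}

lemma ham_rotate1 (p : G.Walk x y) (hp : p.IsHamiltonian) {i : ℕ}
    (hi1 : 1 ≤ i) (hi : i < p.length)
    (hyi : G.Adj y (p.getVert i)) (hxi : G.Adj x (p.getVert (i + 1))) :
    G.IsHamiltonian := by
  have hnd : p.support.Nodup := hp.isPath.support_nodup
  have hL : ∀ z, p.support.count z = 1 := hp
  set L := p.support with hLdef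
  -- the new hamiltonian path from getVert (i+1) to x
  let t : G.Walk x (p.getVert i) := tke p i
  let d : G.Walk (p.getVert (i + 1)) y := p.drop (i + 1)
  let q : G.Walk (p.getVert (i + 1)) x := d.append (Walk.cons hyi t.reverse)
  have hsq : q.support = L.drop (i + 1) ++ (L.take (i + 1)).reverse := by
    simp only [q, support_append, support_cons, List.tail_cons, support_reverse, t, d,
      support_tke, support_drop' p (i+1) (by omega)]
    rfl
  have hq_count : ∀ z, q.support.count z = 1 := by
    intro z
    rw [hsq, List.count_append, List.count_reverse]
    have : L.count z = 1 := hL z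
    rw [← List.take_append_drop (i+1) L, List.count_append] at this
    omega
  have hqp : q.IsPath := IsPath.mk' (List.nodup_iff_count_le_one.2 fun z => (hq_count z).le)
  have hxney : x ≠ y := by
    intro h
    have : (0 : ℕ) = p.length := getVert_inj hnd (by omega) le_rfl
      (by rw [getVert_zero, getVert_length]; exact h)
    omega
  have hemem : s(x, p.getVert (i + 1)) ∉ q.edges := by
    intro hmem
    rw [edges_append, edges_cons, List.mem_append, List.mem_cons] at hmem
    rcases hmem with hd | heq | ht
    · -- x in support of d
      have hx1 : x ∈ L.drop (i+1) := by
        rw [← support_drop' p (i+1) (by omega)]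
        exact fst_mem_support_of_mem_edges _ hd
      have hx2 : x ∈ L.take (i+1) := by
        have := getVert_mem_take p 0
        rw [getVert_zero] at this
        exact mem_take_of_le (by omega) this
      exact take_drop_disjoint hnd (i+1) hx2 hx1
    · rw [Sym2.eq_iff] at heq
      rcases heq with ⟨h1, _⟩ | ⟨h1, h2⟩
      · exact hxney h1
      · -- x = getVert i, i ≥ 1
        have : (0 : ℕ) = i := getVert_inj hnd (by omega) (by omega)
          (by rw [getVert_zero]; exact h1)
        omega
    · -- edge in t.reverse: getVert (i+1) in take (i+1)
      rw [edges_reverse, List.mem_reverse] at ht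
      have h1 : p.getVert (i+1) ∈ L.take (i+1) := by
        have := snd_mem_support_of_mem_edges _ ht
        rwa [support_tke] at this
      exact take_drop_disjoint hnd (i+1) h1 (getVert_mem_drop p (by omega))
  let c : G.Walk x x := Walk.cons hxi q
  have hc : c.IsHamiltonianCycle := by
    refine ⟨(cons_isCycle_iff _ _).2 ⟨hqp, hemem⟩, ?_⟩
    intro z
    rw [support_tail_of_not_nil c not_nil_cons]
    exact hq_count z
  exact fun _ => ⟨x, c, hc⟩

end Ham

section Ham2
variable {V : Type*} [DecidableEq V] [Fintype V] {G : SimpleGraph V} {x y : V}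

lemma ham_rotate2 (p : G.Walk x y) (hp : p.IsHamiltonian) {a b : ℕ}
    (ha : 1 ≤ a) (hab : a + 1 < b) (hb : b + 1 ≤ p.length)
    (hvab : G.Adj (p.getVert a) (p.getVert b))
    (hxa : G.Adj x (p.getVert (a + 1)))
    (hyb : G.Adj y (p.getVert (b - 1))) :
    G.IsHamiltonian := by
  have hnd : p.support.Nodup := hp.isPath.support_nodup
  have hL : ∀ z, p.support.count z = 1 := hp
  set L := p.support with hLdef
  let t : G.Walk x (p.getVert a) := tke p a
  let s2 : G.Walk (p.getVert b) y := p.drop b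
  let m : G.Walk (p.getVert (a + 1)) (p.getVert (b - 1)) :=
    (tke (p.drop (a + 1)) (b - a - 2)).copy rfl
      (by rw [getVert_drop']; congr 1; omega)
  let q : G.Walk (p.getVert (a + 1)) x :=
    m.append (Walk.cons hyb.symm (s2.reverse.append (Walk.cons hvab.symm t.reverse)))
  have hms : m.support = (L.drop (a + 1)).take (b - a - 1) := by
    have : (b - a - 2) + 1 = b - a - 1 := by omega
    simp only [m, support_copy, support_tke, support_drop' p (a+1) (by omega), this]
    rfl
  have hsq : q.support = (L.drop (a + 1)).take (b - a - 1)
      ++ ((L.drop b).reverse ++ (L.take (a + 1)).reverse) := by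
    simp only [q, support_append, support_cons, List.tail_cons, support_reverse, t, s2,
      support_tke, support_drop' p b (by omega), hms]
    rfl
  have hsplit : ∀ z, (L.take (a+1)).count z + (((L.drop (a+1)).take (b-a-1)).count z
      + (L.drop b).count z) = 1 := by
    intro z
    have h0 : L.count z = 1 := hL z
    have h3 : (L.drop (a+1)).drop (b-a-1) = L.drop b := by
      rw [List.drop_drop]; congr 1; omega
    rw [← List.take_append_drop (a+1) L, List.count_append] at h0
    rw [← List.take_append_drop (b-a-1) (L.drop (a+1)), List.count_append, h3] at h0
    -- careful: rewriting drop (a+1) in place may loop; check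
    omega
  have hq_count : ∀ z, q.support.count z = 1 := by
    intro z
    rw [hsq, List.count_append, List.count_append, List.count_reverse, List.count_reverse]
    have := hsplit z
    omega
  have hqp : q.IsPath := IsPath.mk' (List.nodup_iff_count_le_one.2 fun z => (hq_count z).le)
  have hinj : ∀ {j k : ℕ}, j ≤ p.length → k ≤ p.length → p.getVert j = p.getVert k → j = k :=
    fun hj hk h => getVert_inj hnd hj hk h
  have hxtake : ∀ k, 1 ≤ k → x ∈ L.take k := by
    intro k hk
    have := getVert_mem_take p 0
    rw [getVert_zero] at this
    exact mem_take_of_le (by omega) this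
  have hemem : s(x, p.getVert (a + 1)) ∉ q.edges := by
    intro hmem
    rw [edges_append, edges_cons, edges_append, edges_cons, List.mem_append, List.mem_cons,
      List.mem_append, List.mem_cons] at hmem
    rcases hmem with hm | heq | hs | heq | ht
    · -- x in support of m
      have hx1 : x ∈ L.drop (a+1) := by
        have := fst_mem_support_of_mem_edges _ hm
        rw [hms] at this
        exact List.take_subset _ _ this
      exact take_drop_disjoint hnd (a+1) (hxtake _ (by omega)) hx1
    · rw [Sym2.eq_iff] at heq
      rcases heq with ⟨h1, _⟩ | ⟨h1, h2⟩
      · -- x = getVert (b-1)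
        have : (0 : ℕ) = b - 1 := hinj (by omega) (by omega) (by rw [getVert_zero]; exact h1)
        omega
      · -- x = y
        have : (0 : ℕ) = p.length := hinj (by omega) le_rfl
          (by rw [getVert_zero, getVert_length]; exact h1)
        omega
    · -- edge in s2.reverse
      rw [edges_reverse, List.mem_reverse] at hs
      have hx1 : x ∈ L.drop b := by
        have := fst_mem_support_of_mem_edges _ hs
        rwa [support_drop' p b (by omega)] at this
      exact take_drop_disjoint hnd b (hxtake _ (by omega)) hx1
    · rw [Sym2.eq_iff] at heq
      rcases heq with ⟨h1, _⟩ | ⟨h1, _⟩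
      · have : (0 : ℕ) = b := hinj (by omega) (by omega) (by rw [getVert_zero]; exact h1)
        omega
      · have : (0 : ℕ) = a := hinj (by omega) (by omega) (by rw [getVert_zero]; exact h1)
        omega
    · -- edge in t.reverse : getVert (a+1) ∈ take (a+1)
      rw [edges_reverse, List.mem_reverse] at ht
      have h1 : p.getVert (a+1) ∈ L.take (a+1) := by
        have := snd_mem_support_of_mem_edges _ ht
        rwa [support_tke] at this
      exact take_drop_disjoint hnd (a+1) h1 (getVert_mem_drop p (by omega))
  let c : G.Walk x x := Walk.cons hxa q
  have hc : c.IsHamiltonianCycle := by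
    refine ⟨(cons_isCycle_iff _ _).2 ⟨hqp, hemem⟩, ?_⟩
    intro z
    rw [support_tail_of_not_nil c not_nil_cons]
    exact hq_count z
  exact fun _ => ⟨x, c, hc⟩

end Ham2

end SimpleGraph.Walk

theorem nat_min_exists {P : ℕ → Prop} (h : ∃ n, P n) :
    ∃ n, P n ∧ ∀ m, m < n → ¬ P m := by
  classical
  exact ⟨Nat.find h, Nat.find_spec h, fun m hm => Nat.find_min h hm⟩


/-- Let `G` be a 2-tough non-Hamiltonian graph on `n ≥ 3` vertices possessing a
Hamiltonian path from `x` to `y`, where `x` and `y` are non-adjacent vertices with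
`d(x) + d(y) = n - 1`. Then `|N(x) ∩ N(y)| ≥ 2`. -/
theorem stmt_11 {V : Type*} [Fintype V] [DecidableEq V]
    (hn : 3 ≤ Fintype.card V)
    (G : SimpleGraph V) [DecidableRel G.Adj]
    (htough : Tough 2 G) (hham : ¬ G.IsHamiltonian)
    (x y : V) (p : G.Walk x y) (hp : p.IsHamiltonian)
    (hxy : x ≠ y) (hnadj : ¬ G.Adj x y)
    (hdeg : G.degree x + G.degree y = Fintype.card V - 1) :
    2 ≤ (G.neighborSet x ∩ G.neighborSet y).ncard := by
  classical
  set n := Fintype.card V with hndef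
  set len := p.length with hlendef
  have hlen : len = n - 1 := hp.length_eq
  have hlen2 : 2 ≤ len := by omega
  have hnd : p.support.Nodup := hp.isPath.support_nodup
  set v : ℕ → V := p.getVert with hvdef
  have vinj : ∀ {j k : ℕ}, j ≤ len → k ≤ len → v j = v k → j = k :=
    fun hj hk h => Walk.getVert_inj hnd hj hk h
  have hv0 : v 0 = x := p.getVert_zero
  have hvlen : v len = y := p.getVert_length
  have vsurj : ∀ z : V, ∃ j, j ≤ len ∧ v j = z := by
    intro z
    obtain ⟨j, hj1, hj2⟩ := Walk.mem_support_iff_exists_getVert.1 (hp.mem_support z)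
    exact ⟨j, hj2, hj1⟩
  have hpath : ∀ i, i < len → G.Adj (v i) (v (i+1)) := fun i hi => p.adj_getVert_succ hi
  -- Step 1 : the Ore partition
  have hpartF : ∀ i, i < len → G.Adj x (v (i+1)) → G.Adj y (v i) → False := by
    intro i hi hxi hyi
    have hi1 : 1 ≤ i := by
      rcases Nat.eq_zero_or_pos i with h0 | h1
      · rw [h0, hv0] at hyi; exact absurd hyi.symm hnadj
      · exact h1
    exact hham (Walk.ham_rotate1 p hp hi1 hi hyi hxi)
  set A : Finset ℕ := (Finset.range len).filter (fun i => G.Adj x (v (i+1))) with hAdef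
  set B : Finset ℕ := (Finset.range len).filter (fun i => G.Adj y (v i)) with hBdef
  have hAcard : A.card = G.degree x := by
    rw [← card_neighborFinset_eq_degree]
    apply Finset.card_bij (fun i _ => v (i+1))
    · intro i hi
      rw [hAdef, Finset.mem_filter] at hi
      rw [mem_neighborFinset]; exact hi.2
    · intro i hi j hj h
      rw [hAdef, Finset.mem_filter, Finset.mem_range] at hi hj
      have := vinj (by omega) (by omega) h
      omega
    · intro z hz
      rw [mem_neighborFinset] at hz
      obtain ⟨j, hjle, hj⟩ := vsurj z
      have hj0 : j ≠ 0 := by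
        intro h0
        rw [h0, hv0] at hj
        exact G.irrefl (hj ▸ hz)
      refine ⟨j - 1, ?_, ?_⟩
      · rw [hAdef, Finset.mem_filter, Finset.mem_range]
        constructor
        · omega
        · have : j - 1 + 1 = j := by omega
          rw [this, hj]; exact hz
      · have : j - 1 + 1 = j := by omega
        rw [this, hj]
  have hBcard : B.card = G.degree y := by
    rw [← card_neighborFinset_eq_degree]
    apply Finset.card_bij (fun i _ => v i)
    · intro i hi
      rw [hBdef, Finset.mem_filter] at hi
      rw [mem_neighborFinset]; exact hi.2
    · intro i hi j hj h
      rw [hBdef, Finset.mem_filter, Finset.mem_range] at hi hj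
      exact vinj (by omega) (by omega) h
    · intro z hz
      rw [mem_neighborFinset] at hz
      obtain ⟨j, hjle, hj⟩ := vsurj z
      have hjlen : j ≠ len := by
        intro h0
        rw [h0, hvlen] at hj
        exact G.irrefl (hj ▸ hz)
      refine ⟨j, ?_, hj⟩
      rw [hBdef, Finset.mem_filter, Finset.mem_range]
      exact ⟨by omega, hj ▸ hz⟩
  have hABdisj : Disjoint A B := by
    rw [Finset.disjoint_left]
    intro i hiA hiB
    rw [hAdef, Finset.mem_filter, Finset.mem_range] at hiA
    rw [hBdef, Finset.mem_filter] at hiB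
    exact hpartF i hiA.1 hiA.2 hiB.2
  have hABunion : A ∪ B = Finset.range len := by
    apply Finset.eq_of_subset_of_card_le
    · intro i hi
      rcases Finset.mem_union.1 hi with h | h
      · exact Finset.mem_of_mem_filter i h
      · exact Finset.mem_of_mem_filter i h
    · rw [Finset.card_union_of_disjoint hABdisj, hAcard, hBcard, Finset.card_range]
      omega
  have hpart : ∀ i, i < len → (G.Adj x (v (i+1)) ↔ ¬ G.Adj y (v i)) := by
    intro i hi
    constructor
    · intro h1 h2; exact hpartF i hi h1 h2
    · intro h2
      have : i ∈ A ∪ B := by rw [hABunion, Finset.mem_range]; exact hi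
      rcases Finset.mem_union.1 this with h | h
      · exact (Finset.mem_filter.1 h).2
      · exact absurd (Finset.mem_filter.1 h).2 h2
  -- main contradiction setup
  by_contra hcon
  push_neg at hcon
  have h2 : ∀ z1 z2 : V, z1 ∈ G.neighborSet x ∩ G.neighborSet y →
      z2 ∈ G.neighborSet x ∩ G.neighborSet y → z1 = z2 := by
    intro z1 z2 hz1 hz2
    by_contra hne
    have hsub : ({z1, z2} : Set V) ⊆ G.neighborSet x ∩ G.neighborSet y := by
      intro z hz
      rcases hz with h | h
      · exact h ▸ hz1
      · exact h ▸ hz2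
    have := Set.ncard_le_ncard hsub (Set.toFinite _)
    rw [Set.ncard_pair hne] at this
    omega
  have hcommon : ∀ j, 1 ≤ j → j ≤ len - 1 → G.Adj y (v j) → ¬ G.Adj y (v (j-1)) →
      v j ∈ G.neighborSet x ∩ G.neighborSet y := by
    intro j hj1 hj2 hyj hyj'
    have hxj : G.Adj x (v j) := by
      have := (hpart (j-1) (by omega)).2 hyj'
      have heq : j - 1 + 1 = j := by omega
      rwa [heq] at this
    exact ⟨hxj, hyj⟩
  -- r : the least index adjacent to y
  have hex : ∃ i, G.Adj y (v i) := by
    refine ⟨len - 1, ?_⟩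
    have := hpath (len - 1) (by omega)
    have heq : len - 1 + 1 = len := by omega
    rw [heq, hvlen] at this
    exact this.symm
  obtain ⟨r, hyr, hrmin⟩ := nat_min_exists hex
  have hylen1 : G.Adj y (v (len - 1)) := by
    have := hpath (len - 1) (by omega)
    have heq : len - 1 + 1 = len := by omega
    rw [heq, hvlen] at this
    exact this.symm
  have hrle : r ≤ len - 1 := by
    by_contra hgt
    exact hrmin (len - 1) (by omega) hylen1
  have hr1 : 1 ≤ r := by
    rcases Nat.eq_zero_or_pos r with h0 | h1
    · rw [h0, hv0] at hyr; exact absurd hyr.symm hnadj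
    · exact h1
  have hvr_common : v r ∈ G.neighborSet x ∩ G.neighborSet y :=
    hcommon r hr1 hrle hyr (hrmin (r-1) (by omega))
  -- Step 2: N(y) is an interval
  have hC : ∀ i, r ≤ i → i ≤ len - 1 → G.Adj y (v i) := by
    by_contra hCc
    push_neg at hCc
    have hex2 : ∃ i, r ≤ i ∧ i ≤ len - 1 ∧ ¬ G.Adj y (v i) := by
      obtain ⟨i, h1, h2, h3⟩ := hCc
      exact ⟨i, h1, h2, h3⟩
    obtain ⟨m, ⟨hm1, hm2, hm3⟩, hmmin⟩ := nat_min_exists hex2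
    have hmr : r < m := by
      rcases Nat.lt_or_ge r m with h | h
      · exact h
      · have : m = r := by omega
        rw [this] at hm3; exact absurd hyr hm3
    have hex3 : ∃ j, m < j ∧ G.Adj y (v j) := by
      have hmlt : m < len - 1 := by
        rcases Nat.lt_or_ge m (len - 1) with h | h
        · exact h
        · have : m = len - 1 := by omega
          rw [this] at hm3
          exact absurd hylen1 hm3
      exact ⟨len - 1, hmlt, hylen1⟩
    obtain ⟨j, ⟨hj1, hj2⟩, hjmin⟩ := nat_min_exists hex3
    have hjle : j ≤ len - 1 := by
      by_contra hgt
      have hmlt : m < len - 1 := by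
        rcases Nat.lt_or_ge m (len - 1) with h | h
        · exact h
        · have : m = len - 1 := by omega
          rw [this] at hm3
          exact absurd hylen1 hm3
      exact hjmin (len - 1) (by omega) ⟨hmlt, hylen1⟩
    have hjpred : ¬ G.Adj y (v (j - 1)) := by
      rcases Nat.lt_or_ge m (j-1) with h | h
      · intro hadj
        exact hjmin (j-1) (by omega) ⟨h, hadj⟩
      · have : j - 1 = m := by omega
        rw [this]; exact hm3
    have hvj_common : v j ∈ G.neighborSet x ∩ G.neighborSet y :=
      hcommon j (by omega) hjle hj2 hjpred
    have : v r = v j := h2 _ _ hvr_common hvj_common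
    have := vinj (by omega) (by omega) this
    omega
  -- Facts X and Y
  have factY : ∀ i, i ≤ len → (G.Adj y (v i) ↔ (r ≤ i ∧ i ≤ len - 1)) := by
    intro i hi
    constructor
    · intro h
      constructor
      · by_contra hlt
        exact hrmin i (by omega) h
      · rcases Nat.lt_or_ge i len with hl | hl
        · omega
        · have : i = len := by omega
          rw [this, hvlen] at h
          exact absurd h (G.irrefl)
    · intro ⟨h1, h2⟩; exact hC i h1 h2
  have factX : ∀ i, 1 ≤ i → i ≤ len → (G.Adj x (v i) ↔ i ≤ r) := by
    intro i h1 hi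
    have heq : i - 1 + 1 = i := by omega
    have := hpart (i-1) (by omega)
    rw [heq] at this
    rw [this, factY (i-1) (by omega)]
    omega
  -- Step 3 : no crossing edges
  have hcross : ∀ j k, j < r → r < k → k ≤ len → ¬ G.Adj (v j) (v k) := by
    intro j k hjr hrk hklen hadj
    rcases Nat.eq_zero_or_pos j with hj0 | hj1
    · rw [hj0, hv0] at hadj
      have := (factX k (by omega) hklen).1 hadj
      omega
    rcases Nat.lt_or_ge k len with hkl | hkl
    swap
    · have : k = len := by omega
      rw [this, hvlen] at hadj
      have := (factY j (by omega)).1 hadj.symm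
      omega
    -- interior crossing edge : double rotation
    have hxa : G.Adj x (v (j+1)) := by
      apply (factX (j+1) (by omega) (by omega)).2
      omega
    have hyb : G.Adj y (v (k-1)) := by
      apply (factY (k-1) (by omega)).2
      omega
    exact hham (Walk.ham_rotate2 p hp hj1 (by omega) (by omega) hadj hxa hyb)
  -- Step 4 : toughness contradiction with cut {v r}
  set S : Finset V := {v r} with hSdef
  have hxmem : x ∈ ((↑S : Set V)ᶜ) := by
    simp only [hSdef, Finset.coe_singleton, Set.mem_compl_iff, Set.mem_singleton_iff]
    intro h
    have := vinj (by omega) (by omega) (hv0.symm ▸ h : v 0 = v r)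
    omega
  have hymem : y ∈ ((↑S : Set V)ᶜ) := by
    simp only [hSdef, Finset.coe_singleton, Set.mem_compl_iff, Set.mem_singleton_iff]
    intro h
    have := vinj (by omega) (by omega) (hvlen.symm ▸ h : v len = v r)
    omega
  have hdisc : ¬ (G.induce ((↑S : Set V)ᶜ)).Connected := by
    intro hconn
    obtain ⟨w⟩ := hconn.preconnected ⟨x, hxmem⟩ ⟨y, hymem⟩
    have key : ∀ (u1 u2 : ((↑S : Set V)ᶜ : Set V)) (wk : (G.induce ((↑S : Set V)ᶜ)).Walk u1 u2),
        (∃ j, j < r ∧ (u1 : V) = v j) → ∃ j, j < r ∧ (u2 : V) = v j := by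
      intro u1 u2 wk
      induction wk with
      | nil => exact id
      | @cons a b c hadj wk ih =>
        intro ⟨j, hj, hja⟩
        apply ih
        have hGadj : G.Adj (a : V) (b : V) := hadj
        obtain ⟨k, hkle, hkb⟩ := vsurj (b : V)
        have hkr : k ≠ r := by
          intro h
          have hb : (b : V) ≠ v r := by
            have := b.2
            simp only [hSdef, Finset.coe_singleton, Set.mem_compl_iff,
              Set.mem_singleton_iff] at this
            exact this
          exact hb (by rw [← hkb, h])
        rcases Nat.lt_or_ge k r with hk | hk
        · exact ⟨k, hk, hkb.symm⟩
        · exfalso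
          rw [hja, ← hkb] at hGadj
          exact hcross j k hj (by omega) hkle hGadj
    obtain ⟨j, hj, hjy⟩ := key _ _ w ⟨0, by omega, hv0.symm⟩
    have := vinj (by omega) (by omega) (show v len = v j by rw [hvlen]; exact hjy)
    omega
  have h := htough S hdisc
  have hne : Nonempty (G.induce ((↑S : Set V)ᶜ)).ConnectedComponent :=
    ⟨(G.induce _).connectedComponentMk ⟨x, hxmem⟩⟩
  have hfin : Finite (G.induce ((↑S : Set V)ᶜ)).ConnectedComponent := by
    have : Finite (((↑S : Set V)ᶜ : Set V)) := Subtype.finite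
    exact Quot.finite _
  have hpos : 0 < Nat.card (G.induce ((↑S : Set V)ᶜ)).ConnectedComponent := Nat.card_pos
  have hcard1 : S.card = 1 := by rw [hSdef]; exact Finset.card_singleton _
  rw [hcard1] at h
  have hge : (1:ℝ) ≤ (Nat.card (G.induce ((↑S : Set V)ᶜ)).ConnectedComponent : ℝ) := by
    exact_mod_cast hpos
  push_cast at h
  linarith
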